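/- The long-time average queue length X̄(λ, μ, f) = (λ/μ)·(r−f')(f'−f)/(λ(r−f') + μ(r−f)) is strictly increasing in λ on the region where f' < r < (μf + λf')/(λ+μ): its partial derivative with respect to λ is strictly positive. -/

import Mathlib

/-- X̄ is strictly increasing in λ on the stable region: ∂X̄/∂λ > 0. -/
theorem stmt_5 (mu f f' r lam : ℝ)
    (hmu : 0 < mu) (hf' : 0 ≤ f') (hr1 : f' < r) (hr2 : r < f)
    (hlam : 0 < lam) (hstab : lam * (r - f') + mu * (r - f) < 0) :
    0 < deriv (fun l : ℝ =>
      (l / mu) * ((r - f') * (f' - f)) / (l * (r - f') + mu * (r - f))) lam := by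
  have hD : lam * (r - f') + mu * (r - f) ≠ 0 := ne_of_lt hstab
  have h1 : HasDerivAt (fun l : ℝ => (l / mu) * ((r - f') * (f' - f)))
      (((r - f') * (f' - f)) / mu) lam := by
    have := ((hasDerivAt_id lam).div_const mu).mul_const ((r - f') * (f' - f))
    exact this.congr_deriv (by ring)
  have h2 : HasDerivAt (fun l : ℝ => l * (r - f') + mu * (r - f)) (r - f') lam := by
    have := ((hasDerivAt_id lam).mul_const (r - f')).add_const (mu * (r - f))
    simpa using this
  have h : HasDerivAt (fun l : ℝ => (l / mu) * ((r - f') * (f' - f)) / (l * (r - f') + mu * (r - f))) _ lam := h1.div h2 hD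
  rw [h.deriv]
  apply div_pos
  · have key : ((r - f') * (f' - f)) / mu * (lam * (r - f') + mu * (r - f)) -
        lam / mu * ((r - f') * (f' - f)) * (r - f') = (r - f') * (f' - f) * (r - f) := by
      field_simp
      ring
    rw [key]
    nlinarith [mul_pos (mul_pos (sub_pos.mpr hr1) (sub_pos.mpr hr2)) (sub_pos.mpr hr2)]
  · positivity
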